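/- Every A ∈ SU(1,1) is conjugate within SU(1,1) to a matrix of one of the following forms: (1) Λ_e(s) for some s ∈ (−π, π]; (2) ε·Λ_p(t) for some ε ∈ {1,−1} and t ∈ ℝ∖{0}; or (3) ε·Λ_h(t) for some ε ∈ {1,−1} and t > 0. That is, there exists P ∈ SU(1,1) such that P⁻¹AP is one of these matrices. -/

import Mathlib

open Complex Matrix

noncomputable section

/-- The matrix `e₃ = diag(1,-1)`. -/
def e3 : Matrix (Fin 2) (Fin 2) ℂ := !![1, 0; 0, -1]

/-- `SU(1,1)`: matrices of determinant 1 with `S e₃ S* = e₃`. -/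
def SU11 (S : Matrix (Fin 2) (Fin 2) ℂ) : Prop :=
  S.det = 1 ∧ S * e3 * Sᴴ = e3

/-- `Λ_e(t) = [[e^{it},0],[0,e^{-it}]]`. -/
def Λe (t : ℝ) : Matrix (Fin 2) (Fin 2) ℂ :=
  !![Complex.exp (Complex.I * t), 0; 0, Complex.exp (-(Complex.I * t))]

/-- `Λ_p(t) = [[1+it,−it],[it,1−it]]`. -/
def Λp (t : ℝ) : Matrix (Fin 2) (Fin 2) ℂ :=
  !![1 + Complex.I * t, -(Complex.I * t); Complex.I * t, 1 - Complex.I * t]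

/-- `Λ_h(t) = [[cosh t, sinh t],[sinh t, cosh t]]`. -/
def Λh (t : ℝ) : Matrix (Fin 2) (Fin 2) ℂ :=
  !![(Real.cosh t : ℂ), (Real.sinh t : ℂ); (Real.sinh t : ℂ), (Real.cosh t : ℂ)]

/-- The generic shape of an `SU(1,1)` matrix. -/
def Fm (a b : ℂ) : Matrix (Fin 2) (Fin 2) ℂ :=
  !![a, b; (starRingEnd ℂ) b, (starRingEnd ℂ) a]

lemma su11_Fm {a b : ℂ} (h : Complex.normSq a - Complex.normSq b = 1) : SU11 (Fm a b) := by
  constructor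
  · rw [Fm, Matrix.det_fin_two_of, Complex.mul_conj, Complex.mul_conj]
    exact_mod_cast h
  · ext i j
    fin_cases i <;> fin_cases j <;>
      simp [Fm, e3, Matrix.mul_apply, Fin.sum_univ_two, Matrix.conjTranspose_apply,
        Complex.mul_conj] <;>
    try ring
    · exact_mod_cast congrArg (Complex.ofReal) (by linarith : Complex.normSq a + -Complex.normSq b = 1)
    · rw [mul_comm _ b, mul_comm _ a, Complex.mul_conj, Complex.mul_conj]
      exact_mod_cast congrArg (Complex.ofReal) (by linarith : Complex.normSq b + -Complex.normSq a = -1)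

lemma su11_mul {P Q : Matrix (Fin 2) (Fin 2) ℂ} (hP : SU11 P) (hQ : SU11 Q) : SU11 (P * Q) := by
  refine ⟨by rw [Matrix.det_mul, hP.1, hQ.1, one_mul], ?_⟩
  calc (P * Q) * e3 * (P * Q)ᴴ = P * (Q * e3 * Qᴴ) * Pᴴ := by
        rw [Matrix.conjTranspose_mul]; simp only [Matrix.mul_assoc]
    _ = e3 := by rw [hQ.2, hP.2]

lemma su11_form {A : Matrix (Fin 2) (Fin 2) ℂ} (hA : SU11 A) :
    A = Fm (A 0 0) (A 0 1) ∧
    Complex.normSq (A 0 0) - Complex.normSq (A 0 1) = 1 := by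
  set a := A 0 0 with ha; set b := A 0 1 with hb; set c := A 1 0 with hc; set d := A 1 1 with hd
  have h1 : a * (starRingEnd ℂ) a - b * (starRingEnd ℂ) b = 1 := by
    have := congrFun (congrFun hA.2 0) 0
    simpa [e3, Matrix.mul_apply, Fin.sum_univ_two, Matrix.conjTranspose_apply, sub_eq_add_neg]
      using this
  have h2 : a * (starRingEnd ℂ) c - b * (starRingEnd ℂ) d = 0 := by
    have := congrFun (congrFun hA.2 0) 1
    simpa [e3, Matrix.mul_apply, Fin.sum_univ_two, Matrix.conjTranspose_apply, sub_eq_add_neg]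
      using this
  have h3 : c * (starRingEnd ℂ) c - d * (starRingEnd ℂ) d = -1 := by
    have := congrFun (congrFun hA.2 1) 1
    simpa [e3, Matrix.mul_apply, Fin.sum_univ_two, Matrix.conjTranspose_apply, sub_eq_add_neg]
      using this
  have h4 : a * d - b * c = 1 := by rw [← Matrix.det_fin_two A]; exact hA.1
  have e2 : (starRingEnd ℂ) a * c - (starRingEnd ℂ) b * d = 0 := by
    have := congrArg (starRingEnd ℂ) h2; simpa using this
  have hd0 : d ≠ 0 := by
    intro h
    rw [h] at h3
    simp [Complex.mul_conj] at h3
    have h3' : Complex.normSq c = -1 := by exact_mod_cast h3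
    linarith [Complex.normSq_nonneg c]
  have hda : d = (starRingEnd ℂ) a := by
    have key : (starRingEnd ℂ) d * (d - (starRingEnd ℂ) a) = 0 := by
      linear_combination -(d * (starRingEnd ℂ) d) * h1 + ((starRingEnd ℂ) a * (starRingEnd ℂ) d) * h4 + (b * (starRingEnd ℂ) d) * e2
    rcases mul_eq_zero.1 key with h | h
    · exact absurd (by simpa using congrArg (starRingEnd ℂ) h) hd0
    · exact sub_eq_zero.1 h
  have hcb : c = (starRingEnd ℂ) b := by
    have key : b * (c - (starRingEnd ℂ) b) = 0 := by
      rw [hda] at h4; linear_combination h1 - h4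
    rcases mul_eq_zero.1 key with h | h
    · have ha0 : (starRingEnd ℂ) a ≠ 0 := by
        intro h'
        have : a = 0 := by simpa using congrArg (starRingEnd ℂ) h'
        rw [this, h] at h1; simp at h1
      have : (starRingEnd ℂ) a * c = 0 := by rw [h] at e2; simpa using e2
      rw [h]
      simpa [ha0] using mul_eq_zero.1 this
    · exact sub_eq_zero.1 h
  constructor
  · ext i j
    fin_cases i <;> fin_cases j <;> simp [Fm, ← ha, ← hb, ← hc, ← hd, hda, hcb]
  · have := h1
    rw [Complex.mul_conj, Complex.mul_conj] at this
    exact_mod_cast this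

lemma step_e (a b : ℂ) (u : ℝ) :
    Fm a b * Λe u = Λe u * Fm a (Complex.exp (-(2 * Complex.I * u)) * b) := by
  have hconj : (starRingEnd ℂ) (Complex.exp (-(2 * Complex.I * u)) * b)
      = Complex.exp (2 * Complex.I * u) * (starRingEnd ℂ) b := by
    rw [_root_.map_mul, ← Complex.exp_conj]
    congr 1
    simp [Complex.conj_ofNat]
  ext i j
  fin_cases i <;> fin_cases j <;>
    simp [Fm, Λe, Matrix.mul_apply, Fin.sum_univ_two, hconj, ← Complex.exp_add]
  · ring
  · rw [← mul_assoc, ← Complex.exp_add, mul_comm]; congr 1; ring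
  · rw [← mul_assoc, ← Complex.exp_add, mul_comm]; congr 1; ring
  · ring

lemma step_h' (α β b₁ b₂ C S : ℝ) (h : C^2 - S^2 = 1) :
    Fm (α + β * Complex.I) (b₁ + b₂ * Complex.I) * !![(C:ℂ), (S:ℂ); (S:ℂ), (C:ℂ)] =
      !![(C:ℂ), (S:ℂ); (S:ℂ), (C:ℂ)] *
        Fm (α + (β * (C^2+S^2) + b₂ * (2*S*C)) * Complex.I)
           (b₁ + (b₂ * (C^2+S^2) + β * (2*S*C)) * Complex.I) := by
  ext i j
  fin_cases i <;> fin_cases j <;>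
    simp [Fm, Matrix.mul_apply, Fin.sum_univ_two, Complex.ext_iff] <;>
  constructor <;> simp [← Complex.ofReal_pow] <;>
    first
      | ring1
      | linear_combination (β*C + b₂*S) * h
      | linear_combination (b₂*C + β*S) * h
      | linear_combination (-(β*C) - b₂*S) * h
      | linear_combination (-(b₂*C) - β*S) * h

lemma step_h (α β b₁ b₂ : ℝ) (u : ℝ) :
    Fm (α + β * Complex.I) (b₁ + b₂ * Complex.I) * Λh u =
      Λh u * Fm (α + (β * Real.cosh (2*u) + b₂ * Real.sinh (2*u)) * Complex.I)
                (b₁ + (b₂ * Real.cosh (2*u) + β * Real.sinh (2*u)) * Complex.I) := by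
  have hch : Real.cosh (2*u) = Real.cosh u ^ 2 + Real.sinh u ^ 2 := by
    rw [two_mul, Real.cosh_add]; ring
  have hsh : Real.sinh (2*u) = 2 * Real.sinh u * Real.cosh u := by
    rw [two_mul, Real.sinh_add]; ring
  have := step_h' α β b₁ b₂ (Real.cosh u) (Real.sinh u) (Real.cosh_sq_sub_sinh_sq u)
  rw [hch, hsh]
  convert this using 2 <;> simp [Λh]

lemma rot (b w : ℂ) (hb : b ≠ 0) (habs : ‖b‖ = ‖w‖) :
    ∃ u : ℝ, Complex.exp (-(2 * Complex.I * u)) * b = w := by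
  refine ⟨-(Complex.arg (w / b)) / 2, ?_⟩
  have h1 : ‖w/b‖ = 1 := by
    rw [norm_div, ← habs, div_self]
    simp [hb]
  have h2 := Complex.norm_mul_exp_arg_mul_I (w/b)
  rw [h1] at h2
  simp only [Complex.ofReal_one, one_mul] at h2
  have harg : (-(2 * Complex.I * ((-(Complex.arg (w / b)) / 2 : ℝ) : ℂ)))
      = (Complex.arg (w/b) : ℂ) * Complex.I := by push_cast; ring
  rw [harg, h2, div_mul_cancel₀ _ hb]

lemma hyp_exists (x y : ℝ) (h : x^2 - y^2 = 1) (hx : 0 < x) :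
    ∃ u : ℝ, Real.cosh (2*u) = x ∧ Real.sinh (2*u) = y := by
  have hxy : 0 < x + y := by nlinarith [sq_nonneg (x + y)]
  have hinv : (x+y)⁻¹ = x - y := by
    rw [inv_eq_iff_eq_inv, eq_comm, inv_eq_iff_eq_inv, eq_comm]
    field_simp
    nlinarith [h]
  refine ⟨Real.log (x+y)/2, ?_, ?_⟩ <;>
    rw [show 2 * (Real.log (x+y)/2) = Real.log (x+y) by ring]
  · rw [Real.cosh_log hxy, hinv]; ring
  · rw [Real.sinh_log hxy, hinv]; ring

lemma ell_final (a : ℂ) (h : Complex.normSq a = 1) : Fm a 0 = Λe (Complex.arg a) := by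
  have ha : ‖a‖ = 1 := by
    have := Complex.sq_norm a
    rw [h] at this
    nlinarith [norm_nonneg a]
  have e1 : Complex.exp (Complex.I * Complex.arg a) = a := by
    rw [mul_comm]
    have := Complex.norm_mul_exp_arg_mul_I a
    rwa [ha, Complex.ofReal_one, one_mul] at this
  have e2 : (starRingEnd ℂ) a = Complex.exp (-(Complex.I * Complex.arg a)) := by
    conv_lhs => rw [← e1]
    rw [← Complex.exp_conj]
    congr 1
    simp
  ext i j
  fin_cases i <;> fin_cases j <;> simp [Fm, Λe, e1, ← e2]

lemma su11_Λe (u : ℝ) : SU11 (Λe u) := by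
  have h : Λe u = Fm (Complex.exp (Complex.I * u)) 0 := by
    have e2 : (starRingEnd ℂ) (Complex.exp (Complex.I * u)) = Complex.exp (-(Complex.I * u)) := by
      rw [← Complex.exp_conj]
      congr 1
      simp
    ext i j
    fin_cases i <;> fin_cases j <;> simp [Fm, Λe, e2]
  rw [h]
  apply su11_Fm
  have : ‖Complex.exp (Complex.I * u)‖ = 1 := by
    rw [mul_comm]; exact Complex.norm_exp_ofReal_mul_I u
  have h2 := Complex.sq_norm (Complex.exp (Complex.I * u))
  rw [this] at h2
  simp [← h2]

lemma su11_Λh (u : ℝ) : SU11 (Λh u) := by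
  have h : Λh u = Fm (Real.cosh u : ℂ) (Real.sinh u : ℂ) := by
    ext i j
    fin_cases i <;> fin_cases j <;>
      simp [Fm, Λh, ← Complex.sinh_conj, ← Complex.cosh_conj, Complex.conj_ofReal]
  rw [h]
  apply su11_Fm
  rw [Complex.normSq_ofReal, Complex.normSq_ofReal]
  nlinarith [Real.cosh_sq_sub_sinh_sq u]

lemma su11_one : SU11 (1 : Matrix (Fin 2) (Fin 2) ℂ) :=
  ⟨Matrix.det_one, by rw [Matrix.conjTranspose_one, Matrix.one_mul, Matrix.mul_one]⟩

lemma conj_of {P A M : Matrix (Fin 2) (Fin 2) ℂ} (hP : SU11 P) (h : A * P = P * M) :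
    P⁻¹ * A * P = M := by
  have hdet : IsUnit P.det := by rw [hP.1]; exact isUnit_one
  rw [Matrix.mul_assoc, h, ← Matrix.mul_assoc, Matrix.nonsing_inv_mul P hdet, Matrix.one_mul]

set_option maxHeartbeats 2000000 in
theorem su11_conjugacy_classes (A : Matrix (Fin 2) (Fin 2) ℂ) (hA : SU11 A) :
    ∃ P : Matrix (Fin 2) (Fin 2) ℂ, SU11 P ∧
      ((∃ s : ℝ, -Real.pi < s ∧ s ≤ Real.pi ∧ P⁻¹ * A * P = Λe s) ∨
       (∃ (ε : ℂ) (t : ℝ), (ε = 1 ∨ ε = -1) ∧ t ≠ 0 ∧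
          P⁻¹ * A * P = ε • Λp t) ∨
       (∃ (ε : ℂ) (t : ℝ), (ε = 1 ∨ ε = -1) ∧ 0 < t ∧
          P⁻¹ * A * P = ε • Λh t)) := by
  obtain ⟨hform, hnorm⟩ := su11_form hA
  set a := A 0 0 with ha0
  set b := A 0 1 with hb0
  set α := a.re with hα0
  set β := a.im with hβ0
  set b₁ := b.re with hb10
  set b₂ := b.im with hb20
  have ha : a = (α : ℂ) + (β : ℂ) * Complex.I := (Complex.re_add_im a).symm
  have hb : b = (b₁ : ℂ) + (b₂ : ℂ) * Complex.I := (Complex.re_add_im b).symm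
  have hn : α * α + β * β - (b₁ * b₁ + b₂ * b₂) = 1 := by
    have := hnorm
    rw [Complex.normSq_apply, Complex.normSq_apply] at this
    linarith
  by_cases hbz : b = 0
  · -- already diagonal
    refine ⟨1, su11_one, Or.inl ⟨Complex.arg a, Complex.neg_pi_lt_arg a, Complex.arg_le_pi a, ?_⟩⟩
    apply conj_of su11_one
    rw [Matrix.mul_one, Matrix.one_mul, hform, hbz]
    exact ell_final a (by rw [hbz] at hnorm; simpa using hnorm)
  · have hbnsq : 0 < b₁ * b₁ + b₂ * b₂ := by
      have := Complex.normSq_pos.2 hbz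
      rw [Complex.normSq_apply] at this
      exact this
    rcases lt_trichotomy (b₁ * b₁ + b₂ * b₂) (β * β) with hell | hpar | hhyp
    · -- elliptic case
      have hβ : β ≠ 0 := by intro h; rw [h] at hell; nlinarith
      set σ := Real.sqrt (β * β - (b₁ * b₁ + b₂ * b₂)) with hσdef
      have hσ2 : σ * σ = β * β - (b₁ * b₁ + b₂ * b₂) :=
        Real.mul_self_sqrt (by linarith)
      have hσ : 0 < σ := Real.sqrt_pos.2 (by linarith)
      set r := Real.sqrt (b₁ * b₁ + b₂ * b₂) with hrdef
      have hr2 : r * r = b₁ * b₁ + b₂ * b₂ := Real.mul_self_sqrt (by linarith)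
      have hr : 0 < r := Real.sqrt_pos.2 hbnsq
      set sβ : ℝ := if 0 ≤ β then 1 else -1 with hsβdef
      have hsβ2 : sβ * sβ = 1 := by rw [hsβdef]; split <;> norm_num
      have hsββ : 0 < sβ * β := by
        rw [hsβdef]; split
        · rcases lt_or_eq_of_le (by assumption : (0:ℝ) ≤ β) with h | h
          · simpa using h
          · exact absurd h.symm hβ
        · have : β < 0 := lt_of_not_ge (by assumption)
          nlinarith
      -- first rotation: b ↦ r * I
      obtain ⟨u₁, hu₁⟩ := rot b ((r : ℂ) * Complex.I) hbz (by
        rw [Complex.norm_def, Complex.norm_def]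
        congr 1
        rw [Complex.normSq_apply]
        simp [Complex.normSq_apply]
        nlinarith)
      -- second: hyperbolic rotation killing b
      obtain ⟨u₂, hc2, hs2⟩ := hyp_exists (sβ * β / σ) (-(sβ * r) / σ)
        (by field_simp; nlinarith) (by positivity)
      have hA1 : β * (sβ*β/σ) + r * (-(sβ*r)/σ) = sβ*σ := by
        field_simp
        linear_combination (-sβ) * hσ2 + (-sβ) * hr2
      have hB1 : r * (sβ*β/σ) + β * (-(sβ*r)/σ) = 0 := by
        field_simp
        ring
      refine ⟨Λe u₁ * Λh u₂, su11_mul (su11_Λe u₁) (su11_Λh u₂), Or.inl ?_⟩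
      set z : ℂ := (α : ℂ) + ((sβ * σ : ℝ) : ℂ) * Complex.I with hzdef
      have hznorm : Complex.normSq z = 1 := by
        rw [hzdef, Complex.normSq_apply]
        simp
        nlinarith
      refine ⟨Complex.arg z, Complex.neg_pi_lt_arg z, Complex.arg_le_pi z, ?_⟩
      apply conj_of (su11_mul (su11_Λe u₁) (su11_Λh u₂))
      have e1 : A * Λe u₁ = Λe u₁ * Fm a (((0:ℝ):ℂ) + (r:ℝ) * Complex.I) := by
        rw [hform, step_e, hu₁]
        norm_num
      have e2 : Fm a (((0:ℝ):ℂ) + (r:ℝ) * Complex.I) * Λh u₂ = Λh u₂ * Fm z 0 := by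
        rw [ha]
        have hst := step_h α β 0 r u₂
        rw [hc2, hs2] at hst
        have hA1c : (β:ℂ) * ((sβ*β/σ : ℝ):ℂ) + (r:ℂ) * ((-(sβ*r)/σ : ℝ):ℂ) = ((sβ*σ : ℝ):ℂ) := by
          push_cast
          exact_mod_cast hA1
        have hB1c : (r:ℂ) * ((sβ*β/σ : ℝ):ℂ) + (β:ℂ) * ((-(sβ*r)/σ : ℝ):ℂ) = 0 := by
          push_cast
          exact_mod_cast hB1
        rw [hA1c, hB1c] at hst
        rw [hst, hzdef]
        norm_num
      rw [← Matrix.mul_assoc, e1, Matrix.mul_assoc, e2, ← Matrix.mul_assoc,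
        ell_final z hznorm]
    · -- parabolic case
      have hβ : β ≠ 0 := by intro h; rw [h] at hpar; nlinarith
      have hα2 : α * α = 1 := by nlinarith
      have hαor : α = 1 ∨ α = -1 := mul_self_eq_one_iff.1 hα2
      have hαz : α ≠ 0 := by rcases hαor with h | h <;> rw [h] <;> norm_num
      obtain ⟨u, hu⟩ := rot b (-(β:ℂ) * Complex.I) hbz (by
        rw [Complex.norm_def, Complex.norm_def]
        congr 1
        simp [Complex.normSq_apply]
        nlinarith)
      refine ⟨Λe u, su11_Λe u, Or.inr (Or.inl ⟨(α:ℂ), α*β, ?_, mul_ne_zero hαz hβ, ?_⟩)⟩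
      · rcases hαor with h | h
        · left; rw [h]; norm_num
        · right; rw [h]; norm_num
      · apply conj_of (su11_Λe u)
        rw [hform, step_e, hu]
        have hαc : (α:ℂ) * (α:ℂ) = 1 := by exact_mod_cast hα2
        congr 1
        rw [ha]
        ext i j
        fin_cases i <;> fin_cases j <;>
          simp [Fm, Λp, Matrix.smul_apply, smul_eq_mul, Complex.conj_ofReal] <;>
        push_cast <;>
          first
            | linear_combination ((β:ℂ) * Complex.I) * hαc
            | linear_combination (-(β:ℂ) * Complex.I) * hαc
    · -- hyperbolic case
      set r := Real.sqrt (b₁ * b₁ + b₂ * b₂) with hrdef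
      have hr2 : r * r = b₁ * b₁ + b₂ * b₂ := Real.mul_self_sqrt (by linarith)
      have hr : 0 < r := Real.sqrt_pos.2 hbnsq
      set ρ := Real.sqrt ((b₁ * b₁ + b₂ * b₂) - β * β) with hρdef
      have hρ2 : ρ * ρ = (b₁ * b₁ + b₂ * b₂) - β * β := Real.mul_self_sqrt (by linarith)
      have hρ : 0 < ρ := Real.sqrt_pos.2 (by linarith)
      have hα2 : α * α = 1 + ρ * ρ := by rw [hρ2]; nlinarith
      have hαz : α ≠ 0 := by intro h; rw [h] at hα2; nlinarith
      set εr : ℝ := if 0 < α then 1 else -1 with hεrdef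
      have hεr2 : εr * εr = 1 := by rw [hεrdef]; split <;> norm_num
      have hεrα : 0 < εr * α := by
        rw [hεrdef]; split
        · simpa using (by assumption : 0 < α)
        · have : α < 0 := lt_of_le_of_ne (le_of_not_gt (by assumption)) hαz
          nlinarith
      obtain ⟨u₁, hu₁⟩ := rot b ((r : ℂ) * Complex.I) hbz (by
        rw [Complex.norm_def, Complex.norm_def]
        congr 1
        simp [Complex.normSq_apply]
        nlinarith)
      obtain ⟨u₂, hc2, hs2⟩ := hyp_exists (r / ρ) (-β / ρ)
        (by field_simp; linear_combination hr2 - hρ2) (by positivity)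
      have hbne : ((0:ℝ):ℂ) + ((ρ:ℝ):ℂ) * Complex.I ≠ 0 := by
        simp [Complex.ext_iff]
        exact ne_of_gt hρ
      obtain ⟨u₃, hu₃⟩ := rot (((0:ℝ):ℂ) + ((ρ:ℝ):ℂ) * Complex.I) ((εr * ρ : ℝ) : ℂ) hbne (by
        rw [Complex.norm_def, Complex.norm_def]
        congr 1
        simp [Complex.normSq_apply]
        nlinarith)
      set t := Real.arsinh ρ with htdef
      have hsinh : Real.sinh t = ρ := Real.sinh_arsinh ρ
      have hcosh : Real.cosh t = εr * α := by
        rw [htdef, Real.cosh_arsinh]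
        rw [show 1 + ρ^2 = (εr*α)^2 by nlinarith]
        exact Real.sqrt_sq (le_of_lt hεrα)
      refine ⟨Λe u₁ * Λh u₂ * Λe u₃,
        su11_mul (su11_mul (su11_Λe u₁) (su11_Λh u₂)) (su11_Λe u₃),
        Or.inr (Or.inr ⟨(εr:ℂ), t, ?_, Real.arsinh_pos_iff.2 hρ, ?_⟩)⟩
      · rw [hεrdef]; split
        · left; norm_num
        · right; norm_num
      · apply conj_of (su11_mul (su11_mul (su11_Λe u₁) (su11_Λh u₂)) (su11_Λe u₃))
        have e1 : A * Λe u₁ = Λe u₁ * Fm ((α:ℂ) + (β:ℂ) * Complex.I) (((0:ℝ):ℂ) + (r:ℝ) * Complex.I) := by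
          rw [hform, step_e, hu₁, ha]
          norm_num
        have e2 : Fm ((α:ℂ) + (β:ℂ) * Complex.I) (((0:ℝ):ℂ) + (r:ℝ) * Complex.I) * Λh u₂ =
            Λh u₂ * Fm ((α:ℂ) + 0 * Complex.I) (((0:ℝ):ℂ) + ((ρ:ℝ):ℂ) * Complex.I) := by
          have hst := step_h α β 0 r u₂
          rw [hc2, hs2] at hst
          have hA1r : β * (r/ρ) + r * (-β/ρ) = 0 := by field_simp; ring
          have hA1c : (β:ℂ) * ((r/ρ : ℝ):ℂ) + (r:ℂ) * ((-β/ρ : ℝ):ℂ) = (0:ℂ) := by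
            exact_mod_cast hA1r
          have hB1r : r * (r/ρ) + β * (-β/ρ) = ρ := by
            field_simp
            nlinarith
          have hB1c : (r:ℂ) * ((r/ρ : ℝ):ℂ) + (β:ℂ) * ((-β/ρ : ℝ):ℂ) = ((ρ:ℝ):ℂ) := by
            exact_mod_cast hB1r
          rw [hA1c, hB1c] at hst
          exact hst
        have e3' : Fm ((α:ℂ) + 0 * Complex.I) (((0:ℝ):ℂ) + ((ρ:ℝ):ℂ) * Complex.I) * Λe u₃ =
            Λe u₃ * Fm ((α:ℂ) + 0 * Complex.I) ((εr * ρ : ℝ) : ℂ) := by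
          rw [step_e, hu₃]
        have efin : Fm ((α:ℂ) + 0 * Complex.I) ((εr * ρ : ℝ) : ℂ) = (εr:ℂ) • Λh t := by
          ext i j
          fin_cases i <;> fin_cases j <;>
            simp [Fm, Λh, Matrix.smul_apply, smul_eq_mul, Complex.conj_ofReal, hsinh, hcosh] <;>
          push_cast <;> linear_combination (-(α:ℂ)) * (by exact_mod_cast hεr2 : (εr:ℂ) * (εr:ℂ) = 1)
        rw [← Matrix.mul_assoc, ← Matrix.mul_assoc, e1,
          Matrix.mul_assoc (Λe u₁) _ (Λh u₂), e2, ← Matrix.mul_assoc,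
          Matrix.mul_assoc _ _ (Λe u₃), e3', ← Matrix.mul_assoc, efin]
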